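/- Let A ∈ ℝ^{m×n}, let Q ∈ ℝ^{m×μ} be orthonormal (QᵀQ = I_μ), let q ≥ 0 be an integer, set B = (AAᵀ)^q A, and let R ∈ ℝ^{μ×ℓ}, Ω ∈ ℝ^{n×ℓ}, F ∈ ℝ^{ℓ×n} be arbitrary real matrices. Then the non-squared bound ‖A − QQᵀA‖_F ≤ 2‖BΩF − A‖_F + 2‖F‖₂ · ‖QR − BΩ‖_F holds. -/

import Mathlib

open Matrix
open scoped BigOperators

noncomputable section

/-- Frobenius norm of a real matrix. -/
def frobNorm {m n : ℕ} (A : Matrix (Fin m) (Fin n) ℝ) : ℝ :=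
  Real.sqrt (∑ i, ∑ j, A i j ^ 2)

/-- Nonincreasing rearrangement of a finite tuple of reals. -/
def sortedDesc {n : ℕ} (f : Fin n → ℝ) : Fin n → ℝ :=
  fun k => - ((fun i => - f i) ∘ Tuple.sort (fun i => - f i)) k

/-- `sval A k` is the `(k+1)`-st largest singular value of `A` (i.e. 0-based index `k`),
the square root of the `(k+1)`-st largest eigenvalue of `AᵀA`; it is `0` for `k ≥ n`
(in particular for `k ≥ min m n`). -/
def sval {m n : ℕ} (A : Matrix (Fin m) (Fin n) ℝ) (k : ℕ) : ℝ :=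
  if h : k < n then
    Real.sqrt (sortedDesc (show (Aᵀ * A).IsHermitian by simpa using Matrix.isHermitian_conjTranspose_mul_self A).eigenvalues ⟨k, h⟩)
  else 0

/-- Spectral norm (ℓ²→ℓ² operator norm) of a real matrix: its largest singular value. -/
def specNorm {m n : ℕ} (A : Matrix (Fin m) (Fin n) ℝ) : ℝ := sval A 0

/-- `tailDelta A μ = Δ_{μ+1}(A) = sqrt (Σ_{k=μ+1}^{min(m,n)} σ_k(A)²)` (with 1-based σ's,
so 0-based indices `μ, …, min m n - 1`). -/
def tailDelta {m n : ℕ} (A : Matrix (Fin m) (Fin n) ℝ) (μ : ℕ) : ℝ :=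
  Real.sqrt (∑ k ∈ Finset.Ico μ (min m n), sval A k ^ 2)

end
noncomputable section Aux

variable {k m n μ ℓ : ℕ}

lemma frobNorm_nonneg (A : Matrix (Fin m) (Fin n) ℝ) : 0 ≤ frobNorm A := Real.sqrt_nonneg _

lemma specNorm_nonneg (F : Matrix (Fin ℓ) (Fin n) ℝ) : 0 ≤ specNorm F := by
  unfold specNorm sval
  split
  · exact Real.sqrt_nonneg _
  · exact le_refl 0

lemma frobNorm_eq_norm (A : Matrix (Fin m) (Fin n) ℝ) :
    frobNorm A = ‖(WithLp.equiv 2 (Fin m × Fin n → ℝ)).symm (fun p => A p.1 p.2)‖ := by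
  rw [EuclideanSpace.norm_eq, frobNorm, Fintype.sum_prod_type]
  simp [Real.norm_eq_abs, sq_abs]

lemma frobNorm_add_le (A B : Matrix (Fin m) (Fin n) ℝ) :
    frobNorm (A + B) ≤ frobNorm A + frobNorm B := by
  rw [frobNorm_eq_norm, frobNorm_eq_norm, frobNorm_eq_norm]
  have : ((WithLp.equiv 2 (Fin m × Fin n → ℝ)).symm (fun p => (A + B) p.1 p.2)) =
      (WithLp.equiv 2 (Fin m × Fin n → ℝ)).symm (fun p => A p.1 p.2) +
      (WithLp.equiv 2 (Fin m × Fin n → ℝ)).symm (fun p => B p.1 p.2) := rfl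
  rw [this]
  exact norm_add_le _ _

lemma frobNorm_neg (A : Matrix (Fin m) (Fin n) ℝ) : frobNorm (-A) = frobNorm A := by
  simp [frobNorm]

end Aux

noncomputable section Aux2
variable {k m n μ ℓ : ℕ}

lemma sumSq_eq_trace (A : Matrix (Fin m) (Fin n) ℝ) :
    ∑ i, ∑ j, A i j ^ 2 = Matrix.trace (Aᵀ * A) := by
  rw [Matrix.trace, Finset.sum_comm]
  simp [Matrix.diag, Matrix.mul_apply, pow_two]

lemma frob_sub_proj_le (Q : Matrix (Fin m) (Fin μ) ℝ) (hQ : Qᵀ * Q = 1)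
    (M : Matrix (Fin m) (Fin n) ℝ) : frobNorm (M - Q * Qᵀ * M) ≤ frobNorm M := by
  have hQ' : ∀ (X : Matrix (Fin μ) (Fin n) ℝ), Qᵀ * (Q * X) = X := fun X => by
    rw [← Matrix.mul_assoc, hQ, Matrix.one_mul]
  apply Real.sqrt_le_sqrt
  rw [sumSq_eq_trace, sumSq_eq_trace]
  have key : (M - Q * Qᵀ * M)ᵀ * (M - Q * Qᵀ * M) = Mᵀ * M - (Qᵀ * M)ᵀ * (Qᵀ * M) := by
    simp only [Matrix.transpose_sub, Matrix.transpose_mul, Matrix.transpose_transpose,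
      Matrix.sub_mul, Matrix.mul_sub, Matrix.mul_assoc, hQ']
    abel
  rw [key, Matrix.trace_sub]
  have h0 : 0 ≤ Matrix.trace ((Qᵀ * M)ᵀ * (Qᵀ * M)) := by
    rw [← sumSq_eq_trace]
    positivity
  linarith

end Aux2

noncomputable section Aux3
variable {k m n μ ℓ : ℕ}

lemma rayleigh (F : Matrix (Fin ℓ) (Fin n) ℝ) (w : Fin n → ℝ) :
    w ⬝ᵥ ((Fᵀ * F) *ᵥ w) ≤ specNorm F ^ 2 * (w ⬝ᵥ w) := by
  rcases Nat.eq_zero_or_pos n with hn | hn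
  · subst hn
    simp [dotProduct]
  have hFT : (Fᵀ : Matrix (Fin n) (Fin ℓ) ℝ) = Fᴴ :=
    (Matrix.conjTranspose_eq_transpose_of_trivial F).symm
  rw [hFT]
  have hH : (Fᵀ * F).IsHermitian := by simpa using Matrix.isHermitian_conjTranspose_mul_self F
  set lam := hH.eigenvalues with hlam
  set U : Matrix (Fin n) (Fin n) ℝ :=
    (Matrix.IsHermitian.eigenvectorUnitary hH : Matrix (Fin n) (Fin n) ℝ) with hUdef
  have hUU : U * star U = 1 :=
    (Matrix.mem_unitaryGroup_iff).mp (Matrix.IsHermitian.eigenvectorUnitary hH).2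
  have hspec : Fᴴ * F = U * Matrix.diagonal lam * star U := by
    have := hH.spectral_theorem
    rwa [RCLike.ofReal_real_eq_id, Function.id_comp] at this
  -- eigenvalue bounds
  set g : Fin n → ℝ := fun i => - lam i with hg
  have hmax : ∀ i, lam i ≤ sortedDesc lam ⟨0, hn⟩ := by
    intro i
    have h1 : (g ∘ Tuple.sort g) ⟨0, hn⟩ ≤ (g ∘ Tuple.sort g) ((Tuple.sort g)⁻¹ i) := by
      apply Tuple.monotone_sort
      simp [Fin.le_def]
    have h2 : (g ∘ Tuple.sort g) ((Tuple.sort g)⁻¹ i) = g i := by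
      show g (Tuple.sort g ((Tuple.sort g)⁻¹ i)) = g i
      rw [Equiv.Perm.coe_inv, Equiv.apply_symm_apply]
    rw [h2] at h1
    simp only [sortedDesc, hg, Function.comp_apply] at h1 ⊢
    linarith [h1]
  have hnn : 0 ≤ sortedDesc lam ⟨0, hn⟩ := by
    have : sortedDesc lam ⟨0, hn⟩ = lam (Tuple.sort g ⟨0, hn⟩) := by
      simp [sortedDesc, hg]
    rw [this, hlam]
    exact Matrix.eigenvalues_conjTranspose_mul_self_nonneg F _
  have hs2 : specNorm F ^ 2 = sortedDesc lam ⟨0, hn⟩ := by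
    unfold specNorm sval
    rw [dif_pos hn]
    exact Real.sq_sqrt hnn
  -- change of variables
  set y : Fin n → ℝ := star U *ᵥ w with hy
  have hsU : star U = Uᵀ := by
    rw [Matrix.star_eq_conjTranspose, Matrix.conjTranspose_eq_transpose_of_trivial]
  have hyvm : w ᵥ* U = y := by rw [hy, hsU, Matrix.mulVec_transpose]
  have hyy : y ⬝ᵥ y = w ⬝ᵥ w := by
    rw [hy, hsU, Matrix.dotProduct_mulVec, Matrix.mulVec_transpose, Matrix.vecMul_vecMul,
      ← hsU, hUU, Matrix.vecMul_one]
  have hmain : w ⬝ᵥ ((Fᴴ * F) *ᵥ w) = ∑ i, y i * (lam i * y i) := by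
    rw [hspec, ← Matrix.mulVec_mulVec, ← Matrix.mulVec_mulVec, ← hy,
      Matrix.dotProduct_mulVec, hyvm]
    simp [dotProduct, Matrix.mulVec_diagonal]
  rw [hmain, ← hyy]
  calc ∑ i, y i * (lam i * y i) ≤ ∑ i, specNorm F ^ 2 * (y i * y i) := by
        apply Finset.sum_le_sum
        intro i _
        have : y i * (lam i * y i) = lam i * (y i * y i) := by ring
        rw [this]
        apply mul_le_mul_of_nonneg_right ((hmax i).trans_eq hs2.symm)
        exact mul_self_nonneg _
    _ = specNorm F ^ 2 * (y ⬝ᵥ y) := by rw [dotProduct, Finset.mul_sum]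

end Aux3

noncomputable section Aux4
variable {k m n μ ℓ : ℕ}

lemma dotProduct_self_nonneg' (v : Fin n → ℝ) : 0 ≤ v ⬝ᵥ v :=
  Finset.sum_nonneg fun i _ => mul_self_nonneg _

lemma vecMul_sq_le (F : Matrix (Fin ℓ) (Fin n) ℝ) (v : Fin ℓ → ℝ) :
    (v ᵥ* F) ⬝ᵥ (v ᵥ* F) ≤ specNorm F ^ 2 * (v ⬝ᵥ v) := by
  set s := specNorm F with hs
  have hs0 : 0 ≤ s := specNorm_nonneg F
  set u := v ᵥ* F with hu
  have key : u ⬝ᵥ ((Fᵀ * F) *ᵥ u) = (F *ᵥ u) ⬝ᵥ (F *ᵥ u) := by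
    rw [← Matrix.mulVec_mulVec, Matrix.dotProduct_mulVec, Matrix.vecMul_transpose]
  have h1 : (F *ᵥ u) ⬝ᵥ (F *ᵥ u) ≤ s ^ 2 * (u ⬝ᵥ u) := key ▸ rayleigh F u
  have h2 : u ⬝ᵥ u = v ⬝ᵥ (F *ᵥ u) := by rw [Matrix.dotProduct_mulVec, ← hu]
  have hCS : v ⬝ᵥ (F *ᵥ u) ≤ Real.sqrt (v ⬝ᵥ v) * Real.sqrt ((F *ᵥ u) ⬝ᵥ (F *ᵥ u)) := by
    have := Real.sum_mul_le_sqrt_mul_sqrt Finset.univ v (F *ᵥ u)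
    simpa [dotProduct, pow_two] using this
  have h3 : Real.sqrt ((F *ᵥ u) ⬝ᵥ (F *ᵥ u)) ≤ s * Real.sqrt (u ⬝ᵥ u) := by
    have he : s ^ 2 * (u ⬝ᵥ u) = (s * Real.sqrt (u ⬝ᵥ u)) ^ 2 := by
      rw [mul_pow, Real.sq_sqrt (dotProduct_self_nonneg' u)]
    calc Real.sqrt ((F *ᵥ u) ⬝ᵥ (F *ᵥ u)) ≤ Real.sqrt (s ^ 2 * (u ⬝ᵥ u)) :=
          Real.sqrt_le_sqrt h1
      _ = s * Real.sqrt (u ⬝ᵥ u) := by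
          rw [he, Real.sqrt_sq (by positivity)]
  have h4 : u ⬝ᵥ u ≤ Real.sqrt (v ⬝ᵥ v) * (s * Real.sqrt (u ⬝ᵥ u)) :=
    h2.trans_le (hCS.trans (mul_le_mul_of_nonneg_left h3 (Real.sqrt_nonneg _)))
  rcases eq_or_lt_of_le (dotProduct_self_nonneg' u) with h0 | h0
  · rw [← h0]
    exact mul_nonneg (sq_nonneg s) (dotProduct_self_nonneg' v)
  · have hru : 0 < Real.sqrt (u ⬝ᵥ u) := Real.sqrt_pos.mpr h0
    have h5 : Real.sqrt (u ⬝ᵥ u) ≤ Real.sqrt (v ⬝ᵥ v) * s := by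
      have hr2 : Real.sqrt (u ⬝ᵥ u) ^ 2 = u ⬝ᵥ u := Real.sq_sqrt (dotProduct_self_nonneg' u)
      nlinarith [h4, hr2, hru]
    have h6 : u ⬝ᵥ u ≤ (Real.sqrt (v ⬝ᵥ v) * s) ^ 2 := by
      rw [← Real.sq_sqrt (dotProduct_self_nonneg' u)]
      exact pow_le_pow_left₀ (Real.sqrt_nonneg _) h5 2
    calc u ⬝ᵥ u ≤ (Real.sqrt (v ⬝ᵥ v) * s) ^ 2 := h6
      _ = s ^ 2 * (v ⬝ᵥ v) := by
          rw [mul_pow, Real.sq_sqrt (dotProduct_self_nonneg' v)]; ring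

lemma frobNorm_mul_le (M : Matrix (Fin k) (Fin ℓ) ℝ) (F : Matrix (Fin ℓ) (Fin n) ℝ) :
    frobNorm (M * F) ≤ frobNorm M * specNorm F := by
  set s := specNorm F with hs
  have hs0 : 0 ≤ s := specNorm_nonneg F
  have hMF : ∀ i, (M * F) i = M i ᵥ* F := by
    intro i; funext j; simp [Matrix.mul_apply, Matrix.vecMul, dotProduct]
  have key : ∑ i, ∑ j, (M * F) i j ^ 2 ≤ s ^ 2 * ∑ i, ∑ j, M i j ^ 2 := by
    rw [Finset.mul_sum]
    apply Finset.sum_le_sum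
    intro i _
    have e1 : ∑ j, (M * F) i j ^ 2 = (M i ᵥ* F) ⬝ᵥ (M i ᵥ* F) := by
      rw [hMF i]; simp [dotProduct, pow_two]
    have e2 : M i ⬝ᵥ M i = ∑ j, M i j ^ 2 := by simp [dotProduct, pow_two]
    rw [e1, ← e2]
    exact vecMul_sq_le F (M i)
  calc frobNorm (M * F) ≤ Real.sqrt (s ^ 2 * ∑ i, ∑ j, M i j ^ 2) := Real.sqrt_le_sqrt key
    _ = frobNorm M * s := by
        rw [Real.sqrt_mul (sq_nonneg s), Real.sqrt_sq hs0, frobNorm]; ring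

end Aux4

/-- For `B = (AAᵀ)^q A` and orthonormal `Q`, the non-squared bound
`‖A − QQᵀA‖_F ≤ 2‖BΩF − A‖_F + 2‖F‖₂‖QR − BΩ‖_F`. -/
theorem frob_proj_le {m n μ ℓ : ℕ} (hμm : μ ≤ m)
    (A : Matrix (Fin m) (Fin n) ℝ)
    (Q : Matrix (Fin m) (Fin μ) ℝ) (hQ : Qᵀ * Q = 1)
    (q : ℕ) (B : Matrix (Fin m) (Fin n) ℝ) (hB : B = (A * Aᵀ) ^ q * A)
    (R : Matrix (Fin μ) (Fin ℓ) ℝ) (Ω : Matrix (Fin n) (Fin ℓ) ℝ)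
    (F : Matrix (Fin ℓ) (Fin n) ℝ) :
    frobNorm (A - Q * Qᵀ * A) ≤
      2 * frobNorm (B * Ω * F - A) + 2 * specNorm F * frobNorm (Q * R - B * Ω) := by
  have hs0 : 0 ≤ specNorm F := specNorm_nonneg F
  have hQ' : ∀ {p : ℕ} (X : Matrix (Fin μ) (Fin p) ℝ), Qᵀ * (Q * X) = X := by
    intro p X; rw [← Matrix.mul_assoc, hQ, Matrix.one_mul]
  set G := B * Ω with hG
  set X := G * F - A with hX
  set Y := (G - Q * R) * F with hY
  have claim : A - Q * Qᵀ * A = (Y - Q * Qᵀ * Y) + -(X - Q * Qᵀ * X) := by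
    rw [hX, hY]
    simp only [Matrix.mul_sub, Matrix.sub_mul, Matrix.mul_assoc, hQ']
    abel
  have t1 : frobNorm (A - Q * Qᵀ * A) ≤ frobNorm Y + frobNorm X := by
    rw [claim]
    refine (frobNorm_add_le _ _).trans ?_
    rw [frobNorm_neg]
    exact add_le_add (frob_sub_proj_le Q hQ Y) (frob_sub_proj_le Q hQ X)
  have t2 : frobNorm Y ≤ frobNorm (Q * R - G) * specNorm F := by
    rw [hY]
    refine (frobNorm_mul_le _ _).trans ?_
    have he : frobNorm (G - Q * R) = frobNorm (Q * R - G) := by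
      rw [← frobNorm_neg (Q * R - G), neg_sub]
    rw [he]
  linarith [frobNorm_nonneg X, mul_nonneg hs0 (frobNorm_nonneg (Q * R - G)), t1, t2]
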